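/- Let δ ∈ ℝ with cos δ ≥ sin δ > 0, let |ψ_{A-BC}⟩ = |0⟩ ⊗ (cos δ |00⟩ + sin δ |11⟩) and ρ_ABC = |ψ_{A-BC}⟩⟨ψ_{A-BC}|. Then the maximal CHSH violations of the two-qubit reductions satisfy ⟨CHSH⟩²_{ρ_AB} = 4(cos²δ − sin²δ)², ⟨CHSH⟩²_{ρ_AC} = 4(cos²δ − sin²δ)², and ⟨CHSH⟩²_{ρ_BC} = 16 cos²δ sin²δ + 4. -/

import Mathlib

open Matrix Finset

noncomputable section

/-- The three Pauli matrices σ₁, σ₂, σ₃. -/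
def pauli : Fin 3 → Matrix (Fin 2) (Fin 2) ℂ :=
  ![!![0, 1; 1, 0], !![0, -Complex.I; Complex.I, 0], !![1, 0; 0, -1]]

/-- Kronecker (tensor) product of two one-qubit matrices. -/
def kron2 (A B : Matrix (Fin 2) (Fin 2) ℂ) :
    Matrix (Fin 2 × Fin 2) (Fin 2 × Fin 2) ℂ :=
  fun p q => A p.1 q.1 * B p.2 q.2

/-- Correlation matrix M(ρ) of a two-qubit density matrix: M ij = tr (ρ (σᵢ ⊗ σⱼ)). -/
def corr (ρ : Matrix (Fin 2 × Fin 2) (Fin 2 × Fin 2) ℂ) :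
    Matrix (Fin 3) (Fin 3) ℝ :=
  fun i j => ((ρ * kron2 (pauli i) (pauli j)).trace).re

lemma corr_herm (ρ : Matrix (Fin 2 × Fin 2) (Fin 2 × Fin 2) ℂ) :
    ((corr ρ)ᵀ * corr ρ).IsHermitian := by
  simpa [Matrix.conjTranspose_eq_transpose_of_trivial] using
    Matrix.isHermitian_conjTranspose_mul_self (corr ρ)

/-- Maximal CHSH violation squared:  ⟨CHSH⟩²_ρ = 4(τ₁+τ₂) where τ₁ ≥ τ₂ ≥ τ₃ are the
eigenvalues of M(ρ)ᵀM(ρ); equivalently 4(tr(MᵀM) − τ₃) where τ₃ is the smallest one. -/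
def CHSHsq (ρ : Matrix (Fin 2 × Fin 2) (Fin 2 × Fin 2) ℂ) : ℝ :=
  4 * (((corr ρ)ᵀ * corr ρ).trace -
        Finset.univ.inf' Finset.univ_nonempty (corr_herm ρ).eigenvalues)

/-- Partial trace over the third qubit: ρ_AB. -/
def ptrC (ρ : Matrix (Fin 2 × Fin 2 × Fin 2) (Fin 2 × Fin 2 × Fin 2) ℂ) :
    Matrix (Fin 2 × Fin 2) (Fin 2 × Fin 2) ℂ :=
  fun p q => ∑ m : Fin 2, ρ (p.1, p.2, m) (q.1, q.2, m)

/-- Partial trace over the second qubit: ρ_AC. -/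
def ptrB (ρ : Matrix (Fin 2 × Fin 2 × Fin 2) (Fin 2 × Fin 2 × Fin 2) ℂ) :
    Matrix (Fin 2 × Fin 2) (Fin 2 × Fin 2) ℂ :=
  fun p q => ∑ m : Fin 2, ρ (p.1, m, p.2) (q.1, m, q.2)

/-- Partial trace over the first qubit: ρ_BC. -/
def ptrA (ρ : Matrix (Fin 2 × Fin 2 × Fin 2) (Fin 2 × Fin 2 × Fin 2) ℂ) :
    Matrix (Fin 2 × Fin 2) (Fin 2 × Fin 2) ℂ :=
  fun p q => ∑ m : Fin 2, ρ (m, p.1, p.2) (m, q.1, q.2)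

/-- Density matrix |ψ⟩⟨ψ| of a 3-qubit pure state. -/
def pureState3 (ψ : Fin 2 × Fin 2 × Fin 2 → ℂ) :
    Matrix (Fin 2 × Fin 2 × Fin 2) (Fin 2 × Fin 2 × Fin 2) ℂ :=
  fun p q => ψ p * (starRingEnd ℂ) (ψ q)

/-- The one-qubit basis vector |0⟩. -/
def ket0 : Fin 2 → ℂ := ![1, 0]

/-- The one-qubit basis vector |1⟩. -/
def ket1 : Fin 2 → ℂ := ![0, 1]

end


section Helpers

lemma eig_mem_aux (d : Fin 3 → ℝ) (hA : (Matrix.diagonal d).IsHermitian) (i : Fin 3) :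
    ∃ j, hA.eigenvalues i = d j := by
  have hv := hA.mulVec_eigenvectorBasis i
  have hvne : (⇑(hA.eigenvectorBasis i)) ≠ 0 := by
    intro h
    have := hA.eigenvectorBasis.orthonormal.1 i
    rw [show hA.eigenvectorBasis i = 0 from by ext j; exact congrFun h j] at this
    simp at this
  obtain ⟨j, hj⟩ := Function.ne_iff.mp hvne
  refine ⟨j, ?_⟩
  have hthis := congrFun hv j
  simp only [Matrix.mulVec_diagonal, Pi.smul_apply, smul_eq_mul] at hthis
  have h2 : (d j - hA.eigenvalues i) * ((hA.eigenvectorBasis i).ofLp j)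
      = 0 := by
    rw [sub_mul, hthis]; ring
  rcases mul_eq_zero.mp h2 with h | h
  · linarith [sub_eq_zero.mp h]
  · exact absurd h (by simpa using hj)

lemma trace_eq_sum_eig_aux {A : Matrix (Fin 3) (Fin 3) ℝ} (hA : A.IsHermitian) :
    A.trace = ∑ i, hA.eigenvalues i := by
  conv_lhs => rw [hA.spectral_theorem]
  rw [Unitary.conjStarAlgAut_apply, Matrix.trace_mul_cycle, Unitary.coe_star_mul_self, one_mul, Matrix.trace_diagonal]
  simp

lemma inf_eig_aux (a b : ℝ) (hab : a ≤ b)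
    (hA : (Matrix.diagonal ![a, a, b] : Matrix (Fin 3) (Fin 3) ℝ).IsHermitian) :
    Finset.univ.inf' Finset.univ_nonempty hA.eigenvalues = a := by
  have hmem : ∀ i, hA.eigenvalues i = a ∨ hA.eigenvalues i = b := by
    intro i
    obtain ⟨j, hj⟩ := eig_mem_aux _ hA i
    fin_cases j <;> simp at hj <;> [left; left; right] <;> exact hj
  have hsum : hA.eigenvalues 0 + hA.eigenvalues 1 + hA.eigenvalues 2 = a + a + b := by
    have h := (trace_eq_sum_eig_aux hA).symm
    rw [Fin.sum_univ_three] at h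
    rw [h, Matrix.trace_diagonal, Fin.sum_univ_three]
    simp
  have hex : ∃ i, hA.eigenvalues i = a := by
    rcases hmem 0 with h0 | h0
    · exact ⟨0, h0⟩
    rcases hmem 1 with h1 | h1
    · exact ⟨1, h1⟩
    rcases hmem 2 with h2 | h2
    · exact ⟨2, h2⟩
    exact ⟨0, by linarith⟩
  refine le_antisymm ?_ ?_
  · obtain ⟨i, hi⟩ := hex
    exact (Finset.inf'_le _ (Finset.mem_univ i)).trans (le_of_eq hi)
  · refine Finset.le_inf' _ _ fun i _ => ?_
    rcases hmem i with h | h <;> linarith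

lemma inf_eig_congr_aux {A B : Matrix (Fin 3) (Fin 3) ℝ} (hA : A.IsHermitian)
    (hB : B.IsHermitian) (h : A = B) :
    Finset.univ.inf' Finset.univ_nonempty hA.eigenvalues
      = Finset.univ.inf' Finset.univ_nonempty hB.eigenvalues := by
  subst h; rfl

lemma CHSHsq_eq_aux (ρ' : Matrix (Fin 2 × Fin 2) (Fin 2 × Fin 2) ℂ) (a b : ℝ) (hab : a ≤ b)
    (h : (corr ρ')ᵀ * corr ρ' = Matrix.diagonal ![a, a, b]) :
    CHSHsq ρ' = 4 * (a + b) := by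
  have hB : (Matrix.diagonal ![a, a, b] : Matrix (Fin 3) (Fin 3) ℝ).IsHermitian :=
    h ▸ corr_herm ρ'
  unfold CHSHsq
  rw [inf_eig_congr_aux (corr_herm ρ') hB h, inf_eig_aux a b hab hB, h, Matrix.trace_diagonal,
    Fin.sum_univ_three]
  simp only [Matrix.cons_val_zero, Matrix.cons_val_one, Matrix.head_cons,
    Matrix.cons_val_two, Matrix.tail_cons]
  ring

end Helpers

set_option maxHeartbeats 1000000 in
theorem chsh_values_A_BC_state
    (δ : ℝ) (hsin : Real.sin δ > 0) (hcos : Real.cos δ ≥ Real.sin δ)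
    (ψ : Fin 2 × Fin 2 × Fin 2 → ℂ)
    (hψ : ψ = fun p => ket0 p.1 *
      ((Real.cos δ : ℂ) * (ket0 p.2.1 * ket0 p.2.2) +
       (Real.sin δ : ℂ) * (ket1 p.2.1 * ket1 p.2.2)))
    (ρ : Matrix (Fin 2 × Fin 2 × Fin 2) (Fin 2 × Fin 2 × Fin 2) ℂ)
    (hρ : ρ = pureState3 ψ) :
    CHSHsq (ptrC ρ) = 4 * (Real.cos δ ^ 2 - Real.sin δ ^ 2) ^ 2 ∧
    CHSHsq (ptrB ρ) = 4 * (Real.cos δ ^ 2 - Real.sin δ ^ 2) ^ 2 ∧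
    CHSHsq (ptrA ρ) = 16 * Real.cos δ ^ 2 * Real.sin δ ^ 2 + 4 := by
  subst hρ; subst hψ
  have hcorrAB : corr (ptrC (pureState3 (fun p => ket0 p.1 *
        (((Real.cos δ) : ℂ) * (ket0 p.2.1 * ket0 p.2.2) + ((Real.sin δ) : ℂ) * (ket1 p.2.1 * ket1 p.2.2)))))
      = !![0,0,0;0,0,0;0,0,Real.cos δ^2 - Real.sin δ^2] := by
    ext i j
    fin_cases i <;> fin_cases j <;>
      simp [corr, kron2, pauli, ptrC, pureState3, ket0, ket1, Matrix.trace, Matrix.mul_apply,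
        Fintype.sum_prod_type, Fin.sum_univ_two, Complex.ext_iff, Matrix.vecHead, Matrix.vecTail,
        -Complex.ofReal_cos, -Complex.ofReal_sin] <;>
      ring
  have hcorrAC : corr (ptrB (pureState3 (fun p => ket0 p.1 *
        (((Real.cos δ) : ℂ) * (ket0 p.2.1 * ket0 p.2.2) + ((Real.sin δ) : ℂ) * (ket1 p.2.1 * ket1 p.2.2)))))
      = !![0,0,0;0,0,0;0,0,Real.cos δ^2 - Real.sin δ^2] := by
    ext i j
    fin_cases i <;> fin_cases j <;>
      simp [corr, kron2, pauli, ptrB, pureState3, ket0, ket1, Matrix.trace, Matrix.mul_apply,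
        Fintype.sum_prod_type, Fin.sum_univ_two, Complex.ext_iff, Matrix.vecHead, Matrix.vecTail,
        -Complex.ofReal_cos, -Complex.ofReal_sin] <;>
      ring
  have hcorrBC : corr (ptrA (pureState3 (fun p => ket0 p.1 *
        (((Real.cos δ) : ℂ) * (ket0 p.2.1 * ket0 p.2.2) + ((Real.sin δ) : ℂ) * (ket1 p.2.1 * ket1 p.2.2)))))
      = !![2*(Real.cos δ*Real.sin δ),0,0;0,-(2*(Real.cos δ*Real.sin δ)),0;0,0,1] := by
    ext i j
    fin_cases i <;> fin_cases j <;>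
      simp [corr, kron2, pauli, ptrA, pureState3, ket0, ket1, Matrix.trace, Matrix.mul_apply,
        Fintype.sum_prod_type, Fin.sum_univ_two, Complex.ext_iff, Matrix.vecHead, Matrix.vecTail,
        -Complex.ofReal_cos, -Complex.ofReal_sin] <;>
      (first
        | ring1
        | linear_combination Real.sin_sq_add_cos_sq δ)
  have hdAB : (corr (ptrC (pureState3 (fun p => ket0 p.1 *
        (((Real.cos δ) : ℂ) * (ket0 p.2.1 * ket0 p.2.2) + ((Real.sin δ) : ℂ) * (ket1 p.2.1 * ket1 p.2.2))))))ᵀ *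
        corr (ptrC (pureState3 (fun p => ket0 p.1 *
        (((Real.cos δ) : ℂ) * (ket0 p.2.1 * ket0 p.2.2) + ((Real.sin δ) : ℂ) * (ket1 p.2.1 * ket1 p.2.2)))))
      = Matrix.diagonal ![0, 0, (Real.cos δ^2 - Real.sin δ^2)^2] := by
    rw [hcorrAB]
    ext i j
    fin_cases i <;> fin_cases j <;>
      simp [Matrix.mul_apply, Fin.sum_univ_three, Matrix.diagonal, Matrix.vecHead,
        Matrix.vecTail] <;>
      ring
  have hdAC : (corr (ptrB (pureState3 (fun p => ket0 p.1 *
        (((Real.cos δ) : ℂ) * (ket0 p.2.1 * ket0 p.2.2) + ((Real.sin δ) : ℂ) * (ket1 p.2.1 * ket1 p.2.2))))))ᵀ *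
        corr (ptrB (pureState3 (fun p => ket0 p.1 *
        (((Real.cos δ) : ℂ) * (ket0 p.2.1 * ket0 p.2.2) + ((Real.sin δ) : ℂ) * (ket1 p.2.1 * ket1 p.2.2)))))
      = Matrix.diagonal ![0, 0, (Real.cos δ^2 - Real.sin δ^2)^2] := by
    rw [hcorrAC]
    ext i j
    fin_cases i <;> fin_cases j <;>
      simp [Matrix.mul_apply, Fin.sum_univ_three, Matrix.diagonal, Matrix.vecHead,
        Matrix.vecTail] <;>
      ring
  have hdBC : (corr (ptrA (pureState3 (fun p => ket0 p.1 *
        (((Real.cos δ) : ℂ) * (ket0 p.2.1 * ket0 p.2.2) + ((Real.sin δ) : ℂ) * (ket1 p.2.1 * ket1 p.2.2))))))ᵀ *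
        corr (ptrA (pureState3 (fun p => ket0 p.1 *
        (((Real.cos δ) : ℂ) * (ket0 p.2.1 * ket0 p.2.2) + ((Real.sin δ) : ℂ) * (ket1 p.2.1 * ket1 p.2.2)))))
      = Matrix.diagonal ![4*Real.cos δ^2*Real.sin δ^2, 4*Real.cos δ^2*Real.sin δ^2, 1] := by
    rw [hcorrBC]
    ext i j
    fin_cases i <;> fin_cases j <;>
      simp [Matrix.mul_apply, Fin.sum_univ_three, Matrix.diagonal, Matrix.vecHead,
        Matrix.vecTail] <;>
      ring
  have hb1 : (0:ℝ) ≤ (Real.cos δ^2 - Real.sin δ^2)^2 := sq_nonneg _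
  have hb2 : 4*Real.cos δ^2*Real.sin δ^2 ≤ 1 := by
    have h1 := Real.sin_sq_le_one (2*δ)
    rw [Real.sin_two_mul] at h1
    nlinarith [h1]
  refine ⟨?_, ?_, ?_⟩
  · rw [CHSHsq_eq_aux _ 0 ((Real.cos δ^2 - Real.sin δ^2)^2) hb1 hdAB]; ring
  · rw [CHSHsq_eq_aux _ 0 ((Real.cos δ^2 - Real.sin δ^2)^2) hb1 hdAC]; ring
  · rw [CHSHsq_eq_aux _ (4*Real.cos δ^2*Real.sin δ^2) 1 hb2 hdBC]; ring
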